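/- For the elephant activation function with a>0, d≥1, and any ε with 0<ε<1, if |x| ≥ d/(2ε) then |Elephant'(x)| ≤ ε, where |Elephant'(x)| = (d/a)·|x/a|^(d−1)·(1/(1+|x/a|^d))^2. -/

import Mathlib

theorem elephant_deriv_abs_le (a d ε x : ℝ) (ha : 0 < a) (hd : 1 ≤ d)
    (hε : 0 < ε) (hε1 : ε < 1) (hx : d / (2 * ε) ≤ |x|) :
    (d / a) * |x / a| ^ (d - 1) * (1 / (1 + |x / a| ^ d)) ^ 2 ≤ ε := by
  have hd0 : (0:ℝ) < d := lt_of_lt_of_le one_pos hd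
  have hxpos : 0 < |x| := lt_of_lt_of_le (by positivity) hx
  have hax : |x / a| = |x| / a := by rw [abs_div, abs_of_pos ha]
  have ht : 0 < |x| / a := div_pos hxpos ha
  have hu : 0 < (|x| / a) ^ d := Real.rpow_pos_of_pos ht d
  have h1 : (|x| / a) ^ (d - 1) = (|x| / a) ^ d / (|x| / a) := by
    rw [Real.rpow_sub ht, Real.rpow_one]
  rw [hax, h1]
  set u := (|x| / a) ^ d with hudef
  have key : u / (1 + u) ^ 2 ≤ 1 / 4 := by
    rw [div_le_div_iff₀ (by positivity) (by norm_num)]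
    nlinarith [sq_nonneg (1 - u)]
  have heq : d / a * (u / (|x| / a)) * (1 / (1 + u)) ^ 2
      = (d / |x|) * (u / (1 + u) ^ 2) := by
    field_simp
  rw [heq]
  have h3 : d / |x| ≤ 2 * ε := by
    rw [div_le_iff₀ hxpos]
    calc d = (d / (2 * ε)) * (2 * ε) := by field_simp
    _ ≤ |x| * (2 * ε) := mul_le_mul_of_nonneg_right hx (by positivity)
    _ = 2 * ε * |x| := by ring
  have h4 : 0 ≤ d / |x| := by positivity
  nlinarith [mul_le_mul_of_nonneg_left key h4]
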